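/- (First-variation conditions for the heavy top.) Fix m, l, g > 0, I₁, I₃ > 0, ρ ∈ ℝ with ρ ≠ 0 and I₁ ρ ≠ m² l², c ∈ ℝ, Ω₃⁰ ∈ ℝ, a differentiable function Φ : ℝ³ → ℝ, and a differentiable function φ : ℝ → ℝ. On ℝ⁹ with coordinates (Ω, v, Γ) ∈ ℝ³ × ℝ³ × ℝ³, define p = ρ v + m l (Ω × e₃), E⁰ = ½(I₁(Ω₁² + Ω₂²) + I₃ Ω₃²) + m l v·(Ω × e₃) + ½ ρ ‖v‖² + m g l Γ₃, 𝓔 = ½(I₁(Ω₁² + Ω₂²) + I₃ Ω₃²) + m (I₁ ρ/(I₁ ρ − m² l²)) g l Γ₃, and E = E⁰ + c 𝓔 + Φ(‖p‖², p·Γ, ‖Γ‖²) + φ(Ω₃). Then the derivative of E vanishes at the equilibrium (Ω, v, Γ) = (Ω₃⁰ e₃, 0, e₃) if and only if D₂Φ(0,0,1) = 0, D₃Φ(0,0,1) = m g l (m² l² − (1 + c) I₁ ρ)/(2(I₁ ρ − m² l²)), and φ'(Ω₃⁰) = −(1 + c) I₃ Ω₃⁰, where D₂Φ and D₃Φ denote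 the partial derivatives of Φ in its second and third arguments. -/

import Mathlib

open Matrix

/-- The energy–Casimir function `E = E⁰ + c 𝓔 + Φ(‖p‖², p·Γ, ‖Γ‖²) + φ(Ω₃)` for the
Lagrange heavy top on a movable base, on `ℝ⁹` with coordinates `(Ω, v, Γ)`, where
`p = ρv + ml(Ω × e₃)`,
`E⁰ = ½(I₁(Ω₁² + Ω₂²) + I₃Ω₃²) + ml v·(Ω × e₃) + ½ρ‖v‖² + mglΓ₃` and
`𝓔 = ½(I₁(Ω₁² + Ω₂²) + I₃Ω₃²) + m(I₁ρ/(I₁ρ − m²l²))glΓ₃`. -/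
noncomputable def ECfunHT (m l g ρ I₁ I₃ c : ℝ) (Φ : (Fin 3 → ℝ) → ℝ) (φ : ℝ → ℝ)
    (x : (Fin 3 → ℝ) × (Fin 3 → ℝ) × (Fin 3 → ℝ)) : ℝ :=
  let Ω := x.1; let v := x.2.1; let Γ := x.2.2
  let p : Fin 3 → ℝ := ρ • v + (m * l) • (Ω ⨯₃ ![(0 : ℝ), 0, 1])
  (1 / 2) * (I₁ * ((Ω 0) ^ 2 + (Ω 1) ^ 2) + I₃ * (Ω 2) ^ 2)
    + m * l * (v ⬝ᵥ Ω ⨯₃ ![(0 : ℝ), 0, 1]) + (1 / 2) * ρ * (v ⬝ᵥ v) + m * g * l * Γ 2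
    + c * ((1 / 2) * (I₁ * ((Ω 0) ^ 2 + (Ω 1) ^ 2) + I₃ * (Ω 2) ^ 2)
        + m * (I₁ * ρ / (I₁ * ρ - m ^ 2 * l ^ 2)) * g * l * Γ 2)
    + Φ ![p ⬝ᵥ p, p ⬝ᵥ Γ, Γ ⬝ᵥ Γ] + φ (Ω 2)

private lemma lin_deriv (k : ℝ) (w : ℝ → ℝ) (hw : DifferentiableAt ℝ w 0) :
    HasDerivAt (fun t => k + t * w t) (w 0) 0 := by
  have h := (hasDerivAt_id 0).mul hw.hasDerivAt
  simpa using h.const_add k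

private lemma ECfunHT_directional (m l g ρ I₁ I₃ c Ω₃0 : ℝ)
    (Φ : (Fin 3 → ℝ) → ℝ) (hΦ : Differentiable ℝ Φ)
    (φ : ℝ → ℝ) (hφ : Differentiable ℝ φ)
    (y : (Fin 3 → ℝ) × (Fin 3 → ℝ) × (Fin 3 → ℝ)) :
    HasDerivAt (fun t : ℝ => ECfunHT m l g ρ I₁ I₃ c Φ φ
        ((Ω₃0 • ![(0 : ℝ), 0, 1], 0, ![(0 : ℝ), 0, 1]) + t • y))
      (((1 + c) * I₃ * Ω₃0 + deriv φ Ω₃0) * y.1 2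
        + ρ * fderiv ℝ Φ ![(0 : ℝ), 0, 1] (Pi.single 1 1) * y.2.1 2
        + (m * g * l * (1 + c * (I₁ * ρ / (I₁ * ρ - m ^ 2 * l ^ 2)))
            + 2 * fderiv ℝ Φ ![(0 : ℝ), 0, 1] (Pi.single 2 1)) * y.2.2 2) 0 := by
  obtain ⟨a, b, d⟩ := y
  set κ : ℝ := I₁ * ρ / (I₁ * ρ - m ^ 2 * l ^ 2) with hκ
  set γ : ℝ → (Fin 3 → ℝ) := fun t =>
    ![ t * (t * ((ρ * b 0 + m * l * a 1) ^ 2 + (ρ * b 1 - m * l * a 0) ^ 2 + (ρ * b 2) ^ 2)),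
       t * ((ρ * b 0 + m * l * a 1) * (t * d 0) + (ρ * b 1 - m * l * a 0) * (t * d 1)
            + ρ * b 2 * (1 + t * d 2)),
       1 + t * (2 * d 2 + t * (d 0 ^ 2 + d 1 ^ 2 + d 2 ^ 2)) ] with hγdef
  set w : ℝ → ℝ := fun t =>
    (1 + c) * I₃ * Ω₃0 * a 2 + m * g * l * d 2 + c * (m * κ * g * l * d 2)
      + t * ((1 + c) * ((1 / 2) * I₁ * (a 0 ^ 2 + a 1 ^ 2) + (1 / 2) * I₃ * a 2 ^ 2)
             + m * l * (b 0 * a 1 - b 1 * a 0)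
             + (1 / 2) * ρ * (b 0 ^ 2 + b 1 ^ 2 + b 2 ^ 2)) with hwdef
  set K : ℝ := (1 / 2) * I₃ * Ω₃0 ^ 2 + m * g * l
      + c * ((1 / 2) * I₃ * Ω₃0 ^ 2 + m * κ * g * l) with hK
  have hfun : (fun t : ℝ => ECfunHT m l g ρ I₁ I₃ c Φ φ
        ((Ω₃0 • ![(0 : ℝ), 0, 1], 0, ![(0 : ℝ), 0, 1]) + t • (a, b, d)))
      = fun t => (K + t * w t) + Φ (γ t) + φ (Ω₃0 + t * a 2) := by
    funext t
    simp only [ECfunHT, crossProduct, dotProduct, Fin.sum_univ_three, Prod.fst_add,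
      Prod.snd_add, Prod.smul_fst, Prod.smul_snd, Prod.mk_add_mk, Prod.smul_mk,
      Pi.add_apply, Pi.smul_apply, smul_eq_mul, LinearMap.mk₂_apply,
      Matrix.cons_val_zero, Matrix.cons_val_one, Matrix.head_cons, Matrix.cons_val_two,
      Matrix.tail_cons, Pi.zero_apply, mul_zero, mul_one, zero_mul, sub_zero, zero_sub,
      add_zero, zero_add]
    refine congrArg₂ (· + ·) (congrArg₂ (· + ·) (by ring) ?_) (congrArg φ (by ring))
    refine congrArg Φ ?_
    funext i; fin_cases i <;> simp [hγdef] <;> ring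
  rw [hfun]
  have hγ0 : γ 0 = ![(0 : ℝ), 0, 1] := by funext i; fin_cases i <;> simp [hγdef]
  have hγ' : HasDerivAt γ ![(0 : ℝ), ρ * b 2, 2 * d 2] 0 := by
    rw [hasDerivAt_pi]
    intro i
    fin_cases i
    · simp only [hγdef, Matrix.cons_val_zero, Fin.isValue, Matrix.cons_val']
      have h := lin_deriv 0 (fun t => t * ((ρ * b 0 + m * l * a 1) ^ 2
        + (ρ * b 1 - m * l * a 0) ^ 2 + (ρ * b 2) ^ 2)) (by fun_prop)
      simp only [zero_add] at h
      refine h.congr_deriv ?_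
      simp
    · simp only [hγdef, Fin.isValue, Matrix.cons_val_one, Matrix.head_cons]
      have h := lin_deriv 0 (fun t => (ρ * b 0 + m * l * a 1) * (t * d 0)
        + (ρ * b 1 - m * l * a 0) * (t * d 1) + ρ * b 2 * (1 + t * d 2)) (by fun_prop)
      simp only [zero_add] at h
      refine h.congr_deriv ?_
      simp
    · simp only [hγdef, Fin.isValue, Matrix.cons_val_two, Matrix.tail_cons, Matrix.head_cons]
      have h := lin_deriv 1 (fun t => 2 * d 2 + t * (d 0 ^ 2 + d 1 ^ 2 + d 2 ^ 2)) (by fun_prop)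
      refine h.congr_deriv ?_
      simp
  have hΦpart : HasDerivAt (fun t => Φ (γ t))
      (fderiv ℝ Φ ![(0 : ℝ), 0, 1] ![(0 : ℝ), ρ * b 2, 2 * d 2]) 0 := by
    exact (hγ0 ▸ (hΦ ![(0 : ℝ), 0, 1]).hasFDerivAt :
        HasFDerivAt Φ (fderiv ℝ Φ ![(0 : ℝ), 0, 1]) (γ 0)).comp_hasDerivAt 0 hγ'
  have hval : fderiv ℝ Φ ![(0 : ℝ), 0, 1] ![(0 : ℝ), ρ * b 2, 2 * d 2]
      = ρ * b 2 * fderiv ℝ Φ ![(0 : ℝ), 0, 1] (Pi.single 1 1)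
        + 2 * d 2 * fderiv ℝ Φ ![(0 : ℝ), 0, 1] (Pi.single 2 1) := by
    have h : ![(0 : ℝ), ρ * b 2, 2 * d 2]
        = (ρ * b 2) • (Pi.single 1 1 : Fin 3 → ℝ) + (2 * d 2) • (Pi.single 2 1 : Fin 3 → ℝ) := by
      funext i; fin_cases i <;> simp
    rw [h, map_add, _root_.map_smul, _root_.map_smul]; simp [smul_eq_mul]
  have hφpart : HasDerivAt (fun t => φ (Ω₃0 + t * a 2)) (deriv φ Ω₃0 * a 2) 0 := by
    have hin : HasDerivAt (fun t : ℝ => Ω₃0 + t * a 2) (a 2) 0 := by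
      simpa using lin_deriv Ω₃0 (fun _ => a 2) (by fun_prop)
    have h2 : HasDerivAt φ (deriv φ Ω₃0) ((fun t : ℝ => Ω₃0 + t * a 2) 0) := by
      simpa using (hφ Ω₃0).hasDerivAt
    exact h2.comp 0 hin
  have hpoly : HasDerivAt (fun t => K + t * w t) (w 0) 0 := lin_deriv K w (by fun_prop)
  have htot := (hpoly.add hΦpart).add hφpart
  refine htot.congr_deriv ?_
  rw [hval]
  simp only [hwdef]
  ring

private lemma ECfunHT_differentiable (m l g ρ I₁ I₃ c : ℝ)
    (Φ : (Fin 3 → ℝ) → ℝ) (hΦ : Differentiable ℝ Φ)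
    (φ : ℝ → ℝ) (hφ : Differentiable ℝ φ) :
    Differentiable ℝ (ECfunHT m l g ρ I₁ I₃ c Φ φ) := by
  unfold ECfunHT
  simp only [crossProduct, dotProduct, Fin.sum_univ_three, LinearMap.mk₂_apply,
    Pi.add_apply, Pi.smul_apply, smul_eq_mul,
    Matrix.cons_val_zero, Matrix.cons_val_one, Matrix.head_cons, Matrix.cons_val_two,
    Matrix.tail_cons, mul_zero, mul_one, zero_mul, sub_zero, zero_sub, add_zero, zero_add]
  apply Differentiable.add
  apply Differentiable.add
  · fun_prop
  · apply hΦ.comp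
    rw [differentiable_pi]
    intro i
    fin_cases i <;> simp <;> fun_prop
  · fun_prop

/-- First-variation conditions for the heavy top: the derivative of the
energy–Casimir function vanishes at the upright-spinning equilibrium
`(Ω₃⁰e₃, 0, e₃)` iff `D₂Φ(0,0,1) = 0`,
`D₃Φ(0,0,1) = mgl(m²l² − (1+c)I₁ρ)/(2(I₁ρ − m²l²))` and
`φ'(Ω₃⁰) = −(1+c)I₃Ω₃⁰`. -/
theorem heavyTop_first_variation (m l g ρ I₁ I₃ c Ω₃0 : ℝ)
    (hm : 0 < m) (hl : 0 < l) (hg : 0 < g) (hI₁ : 0 < I₁) (hI₃ : 0 < I₃)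
    (hρ : ρ ≠ 0) (hρm : I₁ * ρ ≠ m ^ 2 * l ^ 2)
    (Φ : (Fin 3 → ℝ) → ℝ) (hΦ : Differentiable ℝ Φ)
    (φ : ℝ → ℝ) (hφ : Differentiable ℝ φ) :
    fderiv ℝ (ECfunHT m l g ρ I₁ I₃ c Φ φ)
        (Ω₃0 • ![(0 : ℝ), 0, 1], 0, ![(0 : ℝ), 0, 1]) = 0 ↔
      (fderiv ℝ Φ ![(0 : ℝ), 0, 1] (Pi.single 1 1) = 0 ∧
       fderiv ℝ Φ ![(0 : ℝ), 0, 1] (Pi.single 2 1)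
          = m * g * l * (m ^ 2 * l ^ 2 - (1 + c) * (I₁ * ρ)) / (2 * (I₁ * ρ - m ^ 2 * l ^ 2)) ∧
       deriv φ Ω₃0 = -((1 + c) * I₃ * Ω₃0)) := by
  have hΔ : I₁ * ρ - m ^ 2 * l ^ 2 ≠ 0 := sub_ne_zero.mpr hρm
  set x₀ : (Fin 3 → ℝ) × (Fin 3 → ℝ) × (Fin 3 → ℝ) :=
    (Ω₃0 • ![(0 : ℝ), 0, 1], 0, ![(0 : ℝ), 0, 1]) with hx₀
  set D₂ : ℝ := fderiv ℝ Φ ![(0 : ℝ), 0, 1] (Pi.single 1 1) with hD₂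
  set D₃ : ℝ := fderiv ℝ Φ ![(0 : ℝ), 0, 1] (Pi.single 2 1) with hD₃
  have hE := ECfunHT_differentiable m l g ρ I₁ I₃ c Φ hΦ φ hφ
  have hfd : ∀ y : (Fin 3 → ℝ) × (Fin 3 → ℝ) × (Fin 3 → ℝ),
      fderiv ℝ (ECfunHT m l g ρ I₁ I₃ c Φ φ) x₀ y
        = ((1 + c) * I₃ * Ω₃0 + deriv φ Ω₃0) * y.1 2
          + ρ * D₂ * y.2.1 2
          + (m * g * l * (1 + c * (I₁ * ρ / (I₁ * ρ - m ^ 2 * l ^ 2))) + 2 * D₃) * y.2.2 2 := by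
    intro y
    have hline : HasDerivAt (fun t : ℝ => x₀ + t • y) y 0 := by
      simpa using ((hasDerivAt_id (0 : ℝ)).smul_const y).const_add x₀
    have hpt : HasFDerivAt (ECfunHT m l g ρ I₁ I₃ c Φ φ)
        (fderiv ℝ (ECfunHT m l g ρ I₁ I₃ c Φ φ) x₀) ((fun t : ℝ => x₀ + t • y) 0) := by
      simpa using (hE x₀).hasFDerivAt
    have h1 := hpt.comp_hasDerivAt 0 hline
    exact h1.unique (ECfunHT_directional m l g ρ I₁ I₃ c Ω₃0 Φ hΦ φ hφ y)
  constructor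
  · intro h
    have h1 := hfd (Pi.single 2 1, 0, 0)
    have h2 := hfd (0, Pi.single 2 1, 0)
    have h3 := hfd (0, 0, Pi.single 2 1)
    rw [h] at h1 h2 h3
    simp only [ContinuousLinearMap.zero_apply, Pi.single_eq_same, Pi.zero_apply,
      mul_zero, mul_one, add_zero, zero_add] at h1 h2 h3
    refine ⟨?_, ?_, ?_⟩
    · have := mul_eq_zero.mp h2.symm
      tauto
    · field_simp at h3 ⊢
      linarith [h3]
    · linarith [h1]
  · rintro ⟨h2, h3, h1⟩
    apply ContinuousLinearMap.ext
    intro y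
    rw [hfd y]
    rw [h2, h1, h3]
    simp only [ContinuousLinearMap.zero_apply]
    field_simp
    have hΔ' : ρ * I₁ - m ^ 2 * l ^ 2 ≠ 0 := by rwa [mul_comm ρ I₁]
    field_simp
    ring
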